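/- Let f : ℝ → ℝ be continuously differentiable with f(β) ≤ 0 ≤ f(-β) for some β > 0, and κ ≥ sup_{[-β,β]}|f'|. Let A be the periodic second-order finite-difference Laplacian on a uniform grid (viewed as a weakly diagonally dominant matrix with negative diagonal entries). For any g > 0, τ > 0, ε > 0, define u¹ = ((1/τ + κg)I - ε²A)^{-1}[(1/τ)u⁰ + g(f(u⁰) + κu⁰)] (with f applied componentwise). If ‖u⁰‖_∞ ≤ β then ‖u¹‖_∞ ≤ β. -/

import Mathlib

theorem stmt_13 (M : ℕ) (hM : 3 ≤ M) (f : ℝ → ℝ) (β κ g τ ε h : ℝ)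
    (hβ : 0 < β) (hf : ContDiff ℝ 1 f)
    (hfβ : f β ≤ 0) (hfmβ : 0 ≤ f (-β))
    (hκ : ∀ ξ ∈ Set.Icc (-β) β, |deriv f ξ| ≤ κ)
    (hg : 0 < g) (hτ : 0 < τ) (hε : 0 < ε) (hh : 0 < h)
    (u0 u1 : ZMod M → ℝ)
    (heq : ∀ i : ZMod M,
      (1 / τ + κ * g) * u1 i
        - ε ^ 2 * ((u1 (i + 1) + u1 (i - 1) - 2 * u1 i) / h ^ 2)
      = (1 / τ) * u0 i + g * (f (u0 i) + κ * u0 i))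
    (hu0 : ∀ i, |u0 i| ≤ β) :
    ∀ i, |u1 i| ≤ β := by
  haveI : NeZero M := ⟨by omega⟩
  have hκ0 : 0 ≤ κ := (abs_nonneg _).trans (hκ 0 ⟨by linarith, hβ.le⟩)
  set c : ℝ := 1 / τ + κ * g with hc
  have hcpos : 0 < c := by positivity
  set φ : ℝ → ℝ := fun x => x / τ + g * (f x + κ * x) with hφ
  have hder : ∀ x : ℝ, HasDerivAt φ (1 / τ + g * (deriv f x + κ)) x := by
    intro x
    have h1 : HasDerivAt (fun x : ℝ => x / τ) (1 / τ) x := by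
      simpa using (hasDerivAt_id x).div_const τ
    have h2 : HasDerivAt f (deriv f x) x :=
      ((hf.differentiable one_ne_zero) x).hasDerivAt
    have h3 : HasDerivAt (fun x : ℝ => κ * x) κ x := by
      simpa using (hasDerivAt_id x).const_mul κ
    exact h1.add ((h2.add h3).const_mul g)
  clear_value c φ
  have hmono : MonotoneOn φ (Set.Icc (-β) β) := by
    apply monotoneOn_of_deriv_nonneg (convex_Icc _ _)
    · exact fun x _ => ((hder x).differentiableAt).continuousAt.continuousWithinAt
    · exact fun x _ => ((hder x).differentiableAt).differentiableWithinAt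
    · intro x hx
      rw [interior_Icc] at hx
      have hxI : x ∈ Set.Icc (-β) β := ⟨hx.1.le, hx.2.le⟩
      have hdf := abs_le.mp (hκ x hxI)
      rw [(hder x).deriv]
      have : 0 < 1 / τ := by positivity
      nlinarith [hdf.1]
  have hRHS : ∀ x ∈ Set.Icc (-β) β, |φ x| ≤ c * β := by
    intro x hx
    have h1 : φ x ≤ φ β := hmono hx ⟨by linarith, le_rfl⟩ hx.2
    have h2 : φ (-β) ≤ φ x := hmono ⟨le_rfl, by linarith⟩ hx hx.1
    have hub : φ β ≤ c * β := by
      have hp : g * f β ≤ 0 := mul_nonpos_of_nonneg_of_nonpos hg.le hfβ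
      have hb : β / τ = (1 / τ) * β := by ring
      rw [hφ, hc]
      simp only
      linarith [hp, hb]
    have hlb : -(c * β) ≤ φ (-β) := by
      have hp : 0 ≤ g * f (-β) := mul_nonneg hg.le hfmβ
      have hb : -β / τ = -((1 / τ) * β) := by ring
      rw [hφ, hc]
      simp only
      linarith [hp, hb]
    rw [abs_le]; constructor <;> linarith
  have hRHSi : ∀ i, |(1 / τ) * u0 i + g * (f (u0 i) + κ * u0 i)| ≤ c * β := by
    intro i
    have := hRHS (u0 i) (abs_le.mp (hu0 i))
    simpa [hφ, div_eq_inv_mul, one_div, mul_comm] using this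
  -- max bound
  have hmax : ∀ i, u1 i ≤ β := by
    obtain ⟨i0, hi0⟩ := Finite.exists_max u1
    intro i
    have hL : (u1 (i0 + 1) + u1 (i0 - 1) - 2 * u1 i0) / h ^ 2 ≤ 0 := by
      apply div_nonpos_of_nonpos_of_nonneg
      · have := hi0 (i0 + 1); have := hi0 (i0 - 1); linarith
      · positivity
    have h1 := heq i0
    have h2 := (abs_le.mp (hRHSi i0)).2
    have hεL : ε ^ 2 * ((u1 (i0 + 1) + u1 (i0 - 1) - 2 * u1 i0) / h ^ 2) ≤ 0 :=
      mul_nonpos_of_nonneg_of_nonpos (sq_nonneg ε) hL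
    have : c * u1 i0 ≤ c * β := by linarith
    have hle : u1 i0 ≤ β := le_of_mul_le_mul_left this hcpos
    exact (hi0 i).trans hle
  have hmin : ∀ i, -β ≤ u1 i := by
    obtain ⟨i0, hi0⟩ := Finite.exists_min u1
    intro i
    have hL : 0 ≤ (u1 (i0 + 1) + u1 (i0 - 1) - 2 * u1 i0) / h ^ 2 := by
      apply div_nonneg
      · have := hi0 (i0 + 1); have := hi0 (i0 - 1); linarith
      · positivity
    have h1 := heq i0
    have h2 := (abs_le.mp (hRHSi i0)).1
    have hεL : 0 ≤ ε ^ 2 * ((u1 (i0 + 1) + u1 (i0 - 1) - 2 * u1 i0) / h ^ 2) :=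
      mul_nonneg (sq_nonneg ε) hL
    have : c * (-β) ≤ c * u1 i0 := by linarith
    have hle : -β ≤ u1 i0 := le_of_mul_le_mul_left this hcpos
    exact hle.trans (hi0 i)
  intro i
  exact abs_le.mpr ⟨hmin i, hmax i⟩
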